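/- Let G be a connected bipartite graph with |V(G)| ≥ 2d + 2 and α(G) ≥ d + 1, for an integer d ≥ 1. Then there exists a set S ⊆ E(G) with |S| ≤ 2d + 1 such that α(G/S) ≤ α(G) − d. -/

import Mathlib

open SimpleGraph

def IsIndepSet' {V : Type*} (G : SimpleGraph V) (s : Finset V) : Prop :=
  ∀ u ∈ s, ∀ v ∈ s, ¬ G.Adj u v

noncomputable def alpha' {V : Type*} (G : SimpleGraph V) : ℕ :=
  sSup {n | ∃ s : Finset V, IsIndepSet' G s ∧ s.card = n}

def IsVC' {V : Type*} (G : SimpleGraph V) (s : Finset V) : Prop :=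
  ∀ ⦃u v : V⦄, G.Adj u v → u ∈ s ∨ v ∈ s

noncomputable def tau' {V : Type*} (G : SimpleGraph V) : ℕ :=
  sInf {n | ∃ s : Finset V, IsVC' G s ∧ s.card = n}

def IsMatching' {V : Type*} (G : SimpleGraph V) (M : Finset (Sym2 V)) : Prop :=
  (↑M : Set (Sym2 V)) ⊆ G.edgeSet ∧
    (↑M : Set (Sym2 V)).Pairwise fun e f => ∀ v : V, v ∈ e → v ∉ f

noncomputable def mu' {V : Type*} (G : SimpleGraph V) : ℕ :=
  sSup {n | ∃ M : Finset (Sym2 V), IsMatching' G M ∧ M.card = n}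

noncomputable def omega' {V : Type*} (G : SimpleGraph V) : ℕ :=
  sSup {n | ∃ s : Finset V, G.IsClique (↑s : Set V) ∧ s.card = n}

def IsBipartite' {V : Type*} (G : SimpleGraph V) : Prop :=
  ∃ A : Set V, ∀ ⦃u v : V⦄, G.Adj u v → (u ∈ A ↔ v ∉ A)

/-- The contraction `G/S`: vertices are the connected components of the spanning
subgraph `(V(G), S)`, two components adjacent iff they contain adjacent vertices of `G`. -/
noncomputable def contract' {V : Type*} (G : SimpleGraph V) (S : Set (Sym2 V)) :
    SimpleGraph (SimpleGraph.fromEdgeSet S).ConnectedComponent :=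
  SimpleGraph.fromRel fun A B => ∃ u v : V,
    (SimpleGraph.fromEdgeSet S).connectedComponentMk u = A ∧
    (SimpleGraph.fromEdgeSet S).connectedComponentMk v = B ∧ G.Adj u v

/-- Add a universal vertex `none` to `G`. -/
def addUniversal {V : Type*} (G : SimpleGraph V) : SimpleGraph (Option V) :=
  SimpleGraph.fromRel fun a b =>
    a = none ∨ ∃ u v : V, a = some u ∧ b = some v ∧ G.Adj u v
open Finset in
section
variable {V : Type*} [Fintype V] {G : SimpleGraph V}

lemma indep_le_alpha' (s : Finset V) (h : IsIndepSet' G s) : s.card ≤ alpha' G := by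
  apply le_csSup
  · exact ⟨Fintype.card V, fun n ⟨s, _, hc⟩ => hc ▸ s.card_le_univ⟩
  · exact ⟨s, h, rfl⟩

lemma alpha'_le {m : ℕ} (h : ∀ s : Finset V, IsIndepSet' G s → s.card ≤ m) :
    alpha' G ≤ m :=
  csSup_le ⟨0, ∅, fun u hu => absurd hu (by simp), rfl⟩
    (fun n ⟨s, hs, hc⟩ => hc ▸ h s hs)

end
open Finset in
lemma koenig {V : Type*} [Fintype V] (G : SimpleGraph V) (hbip : IsBipartite' G) :
    ∃ M : Finset (Sym2 V), IsMatching' G M ∧ Fintype.card V ≤ alpha' G + M.card := by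
  classical
  obtain ⟨A, hA⟩ := hbip
  set A' : Finset V := univ.filter (· ∈ A) with hA'def
  set N : Finset V → Finset V := fun X => univ.filter (fun v => ∃ u ∈ X, G.Adj u v) with hNdef
  obtain ⟨X0, hX0mem, hX0max⟩ := Finset.exists_max_image A'.powerset
    (fun X => (X.card : ℤ) - (N X).card) ⟨∅, by simp⟩
  have hX0A : X0 ⊆ A' := mem_powerset.mp hX0mem
  have hNX0 : (N X0).card ≤ X0.card := by
    have h := hX0max ∅ (by simp)
    have h2 : (N (∅:Finset V)) = ∅ := by ext v; simp [hNdef]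
    rw [h2] at h
    simp only [card_empty, Nat.cast_zero, sub_zero] at h
    have h3 : ((N X0).card : ℤ) ≤ (X0.card : ℤ) := by linarith
    exact_mod_cast h3
  set d0 : ℕ := X0.card - (N X0).card with hd0def
  have hd0 : ∀ X ⊆ A', (X.card : ℤ) ≤ (N X).card + d0 := by
    intro X hX
    have := hX0max X (mem_powerset.mpr hX)
    have hcast : (d0 : ℤ) = (X0.card : ℤ) - (N X0).card := by
      rw [hd0def]; exact Nat.cast_sub hNX0
    rw [hcast]; linarith
  -- Hall's theorem setup
  set W := V ⊕ Fin d0 with hW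
  set t : {x : V // x ∈ A'} → Finset W := fun a =>
    ((N {a.1}).map ⟨Sum.inl, Sum.inl_injective⟩) ∪
      ((univ : Finset (Fin d0)).map ⟨Sum.inr, Sum.inr_injective⟩) with htdef
  have hall : ∀ s : Finset {x : V // x ∈ A'}, s.card ≤ (s.biUnion t).card := by
    intro s
    rcases s.eq_empty_or_nonempty with rfl | ⟨a0, ha0⟩
    · simp
    · set X := s.image Subtype.val with hXdef
      have hXA : X ⊆ A' := by
        intro x hx; obtain ⟨a, _, rfl⟩ := mem_image.mp hx; exact a.2
      have hsub : ((N X).map ⟨Sum.inl, Sum.inl_injective⟩) ∪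
          ((univ : Finset (Fin d0)).map ⟨Sum.inr, Sum.inr_injective⟩) ⊆ s.biUnion t := by
        intro w hw
        rcases mem_union.mp hw with hw | hw
        · obtain ⟨x, hx, rfl⟩ := mem_map.mp hw
          obtain ⟨u, hu, hadj⟩ := (mem_filter.mp hx).2
          obtain ⟨a, ha, rfl⟩ := mem_image.mp hu
          refine mem_biUnion.mpr ⟨a, ha, ?_⟩
          refine mem_union.mpr (Or.inl (mem_map.mpr ⟨x, ?_, rfl⟩))
          exact mem_filter.mpr ⟨mem_univ _, ⟨a.1, by simp, hadj⟩⟩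
        · exact mem_biUnion.mpr ⟨a0, ha0, mem_union.mpr (Or.inr hw)⟩
      have hdisj : Disjoint ((N X).map ⟨Sum.inl, Sum.inl_injective⟩)
          ((univ : Finset (Fin d0)).map ⟨Sum.inr, Sum.inr_injective⟩) := by
        simp only [Finset.disjoint_left, mem_map]
        rintro w ⟨x, _, rfl⟩ ⟨z, _, h⟩
        exact Sum.inr_ne_inl h
      have hcardX : X.card = s.card := card_image_of_injective _ Subtype.val_injective
      have h1 := card_le_card hsub
      rw [card_union_of_disjoint hdisj, card_map, card_map, card_univ, Fintype.card_fin] at h1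
      have h2 := hd0 X hXA
      have : s.card ≤ (N X).card + d0 := by rw [← hcardX]; exact_mod_cast h2
      omega
  obtain ⟨f, hfinj, hf⟩ := Finset.all_card_le_biUnion_card_iff_exists_injective t |>.mp hall
  set Q : Finset {x : V // x ∈ A'} := univ.filter (fun a => (f a).isLeft) with hQdef
  set g : {x : V // x ∈ A'} → V := fun a => ((f a).getLeft?).getD a.1 with hgdef
  have hgspec : ∀ a ∈ Q, f a = Sum.inl (g a) := by
    intro a ha
    have : (f a).isLeft := (mem_filter.mp ha).2
    obtain ⟨w, hw⟩ := Sum.isLeft_iff.mp this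
    rw [hgdef]; simp [hw]
  have hgN : ∀ a ∈ Q, g a ∈ N {a.1} := by
    intro a ha
    have h1 := hf a
    rw [hgspec a ha] at h1
    rcases mem_union.mp h1 with h | h
    · obtain ⟨x, hx, hx2⟩ := mem_map.mp h
      simp only [Function.Embedding.coeFn_mk] at hx2
      exact (Sum.inl_injective hx2) ▸ hx
    · obtain ⟨z, _, hz⟩ := mem_map.mp h
      exact absurd hz (by simp)
  have hgadj : ∀ a ∈ Q, G.Adj a.1 (g a) := by
    intro a ha
    obtain ⟨u, hu, hadj⟩ := (mem_filter.mp (hgN a ha)).2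
    simpa [mem_singleton.mp hu] using hadj
  have haA : ∀ a : {x : V // x ∈ A'}, a.1 ∈ A := fun a => (mem_filter.mp a.2).2
  have hgA : ∀ a ∈ Q, g a ∉ A := fun a ha => (hA (hgadj a ha)).mp (haA a)
  have hginj : ∀ a ∈ Q, ∀ b ∈ Q, g a = g b → a = b := by
    intro a ha b hb hgab
    apply hfinj
    rw [hgspec a ha, hgspec b hb, hgab]
  set M : Finset (Sym2 V) := Q.image (fun a => s(a.1, g a)) with hMdef
  have hMmem : ∀ e ∈ M, ∃ a ∈ Q, e = s(a.1, g a) := by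
    intro e he
    obtain ⟨a, ha, rfl⟩ := mem_image.mp he
    exact ⟨a, ha, rfl⟩
  have hMmatch : IsMatching' G M := by
    constructor
    · intro e he
      obtain ⟨a, ha, rfl⟩ := hMmem e he
      exact (hgadj a ha)
    · intro e₁ he₁ e₂ he₂ hne v hv₁ hv₂
      obtain ⟨a, ha, rfl⟩ := hMmem e₁ he₁
      obtain ⟨b, hb, rfl⟩ := hMmem e₂ he₂
      rcases Sym2.mem_iff.mp hv₁ with rfl | rfl <;>
        rcases Sym2.mem_iff.mp hv₂ with h | h
      · exact hne (by rw [Subtype.val_injective h])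
      · exact hgA b hb (h ▸ haA a)
      · exact hgA a ha (h ▸ haA b)
      · exact hne (by rw [hginj a ha b hb h])
  have hMcard : Q.card ≤ M.card := by
    apply le_of_eq
    symm
    apply card_image_of_injOn
    intro a ha b hb heq
    rw [Sym2.eq_iff] at heq
    rcases heq with ⟨h1, _⟩ | ⟨h1, h2⟩
    · exact Subtype.val_injective h1
    · exact absurd (h1 ▸ haA a) (hgA b hb)
  -- bound on the complement of Q
  have hQc : (univ \ Q).card ≤ d0 := by
    have hsub : (univ \ Q).image f ⊆ (univ : Finset (Fin d0)).map ⟨Sum.inr, Sum.inr_injective⟩ := by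
      intro w hw
      obtain ⟨a, ha, rfl⟩ := mem_image.mp hw
      have hnl : ¬ (f a).isLeft := fun h => (mem_sdiff.mp ha).2 (mem_filter.mpr ⟨mem_univ _, h⟩)
      obtain ⟨z, hz⟩ := Sum.isRight_iff.mp (Sum.not_isLeft.mp hnl)
      rw [hz]
      exact mem_map.mpr ⟨z, mem_univ _, rfl⟩
    have h1 := card_le_card hsub
    rwa [card_image_of_injective _ hfinj, card_map, card_univ, Fintype.card_fin] at h1
  have hQQc : Q.card + (univ \ Q).card = A'.card := by
    rw [card_sdiff_of_subset (subset_univ Q)]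
    have h1 : Q.card ≤ (univ : Finset {x : V // x ∈ A'}).card := card_le_card (subset_univ Q)
    have h2 : (univ : Finset {x : V // x ∈ A'}).card = A'.card := by
      rw [card_univ, Fintype.card_coe]
    omega
  -- the independent set
  set I : Finset V := ((univ \ A') \ N X0) ∪ X0 with hIdef
  have hIindep : IsIndepSet' G I := by
    have key : ∀ u v : V, u ∈ I → v ∈ I → u ∈ A' → G.Adj u v → False := by
      intro u v hu hv huA hadj
      have huX0 : u ∈ X0 := by
        rcases mem_union.mp hu with h | h
        · exact absurd huA (mem_sdiff.mp (mem_sdiff.mp h).1).2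
        · exact h
      have hvN : v ∈ N X0 := mem_filter.mpr ⟨mem_univ _, ⟨u, huX0, hadj⟩⟩
      have hvA : v ∉ A := (hA hadj).mp (mem_filter.mp huA).2
      rcases mem_union.mp hv with h | h
      · exact (mem_sdiff.mp h).2 hvN
      · exact hvA (mem_filter.mp (hX0A h)).2
    intro u hu v hv hadj
    by_cases huA : u ∈ A'
    · exact key u v hu hv huA hadj
    · have hvA : v ∈ A' := by
        have : v ∈ A := by
          by_contra hvA
          exact huA (mem_filter.mpr ⟨mem_univ _, (hA hadj).mpr hvA⟩)
        exact mem_filter.mpr ⟨mem_univ _, this⟩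
      exact key v u hv hu hvA hadj.symm
  have hIcard : Fintype.card V + X0.card ≤ I.card + A'.card + (N X0).card := by
    have hdisj : Disjoint ((univ \ A') \ N X0) X0 := by
      apply Finset.disjoint_left.mpr
      intro x hx hx0
      exact (mem_sdiff.mp (mem_sdiff.mp hx).1).2 (hX0A hx0)
    rw [hIdef, card_union_of_disjoint hdisj]
    have h1 : (Fintype.card V - A'.card - (N X0).card) ≤ ((univ \ A') \ N X0).card := by
      have e1 : (univ \ A').card = Fintype.card V - A'.card := by
        rw [card_sdiff_of_subset (subset_univ _), card_univ]
      calc Fintype.card V - A'.card - (N X0).card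
          = (univ \ A').card - (N X0).card := by rw [e1]
        _ ≤ ((univ \ A') \ N X0).card := le_card_sdiff _ _
    have h2 : A'.card ≤ Fintype.card V := by
      rw [← card_univ]; exact card_le_card (subset_univ _)
    omega
  have halphaI : I.card ≤ alpha' G := indep_le_alpha' I hIindep
  refine ⟨M, hMmatch, ?_⟩
  have hkey : d0 + (N X0).card = X0.card := Nat.sub_add_cancel hNX0
  have hX0le : X0.card ≤ A'.card := card_le_card hX0A
  omega
open Finset in
lemma walk_cross {V : Type*} {G : SimpleGraph V} (T : Finset V) :
    ∀ {u w : V}, G.Walk u w → u ∈ T → w ∉ T → ∃ a ∈ T, ∃ b, b ∉ T ∧ G.Adj a b := by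
  intro u w p
  induction p with
  | nil => intro h1 h2; exact absurd h1 h2
  | @cons u v w h p ih =>
    intro h1 h2
    by_cases hv : v ∈ T
    · exact ih hv h2
    · exact ⟨u, h1, v, hv, h⟩

lemma isolated_eq {V : Type*} {H : SimpleGraph V} {v : V} (hv : ∀ w, ¬ H.Adj v w) :
    ∀ w, H.Reachable v w → w = v := by
  intro w hr
  obtain ⟨p⟩ := hr
  cases p with
  | nil => rfl
  | cons h _ => exact absurd h (hv _)

open Finset in
lemma grow_step {V : Type*} [Fintype V] [DecidableEq V] {G : SimpleGraph V}
    (hconn : G.Connected)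
    {M : Finset (Sym2 V)} (hM : IsMatching' G M)
    {T : Finset V} {S : Finset (Sym2 V)}
    (hSE : (↑S : Set (Sym2 V)) ⊆ G.edgeSet)
    (hST : ∀ e ∈ S, ∀ v ∈ e, v ∈ T)
    (hcard : S.card + 1 = T.card)
    (hreach : ∀ u ∈ T, ∀ v ∈ T, (SimpleGraph.fromEdgeSet (↑S : Set (Sym2 V))).Reachable u v)
    (hclosed : ∀ e ∈ M, ∀ x y : V, e = s(x,y) → (x ∈ T ↔ y ∈ T))
    (hproper : T ≠ Finset.univ) :
    ∃ (T' : Finset V) (S' : Finset (Sym2 V)),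
      (↑S' : Set (Sym2 V)) ⊆ G.edgeSet ∧
      (∀ e ∈ S', ∀ v ∈ e, v ∈ T') ∧
      S'.card + 1 = T'.card ∧
      (∀ u ∈ T', ∀ v ∈ T', (SimpleGraph.fromEdgeSet (↑S' : Set (Sym2 V))).Reachable u v) ∧
      (∀ e ∈ M, ∀ x y : V, e = s(x,y) → (x ∈ T' ↔ y ∈ T')) ∧
      T.card < T'.card ∧ T'.card ≤ T.card + 2 := by
  classical
  have hTne : T.Nonempty := by
    rw [← card_pos]; omega
  obtain ⟨v0, hv0⟩ := hTne
  obtain ⟨z, hz⟩ : ∃ z, z ∉ T := by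
    by_contra h
    push_neg at h
    exact hproper (eq_univ_iff_forall.mpr h)
  obtain ⟨u, hu, v, hv, hadj⟩ :=
    walk_cross T ((hconn.preconnected v0 z).some) hv0 hz
  have huv : u ≠ v := fun h => hv (h ▸ hu)
  have hmono : ∀ x y : V, (SimpleGraph.fromEdgeSet (↑S : Set (Sym2 V))).Reachable x y →
      ∀ (S' : Finset (Sym2 V)), S ⊆ S' →
      (SimpleGraph.fromEdgeSet (↑S' : Set (Sym2 V))).Reachable x y := by
    intro x y hxy S' hSS'
    exact hxy.mono (SimpleGraph.fromEdgeSet_mono (by exact_mod_cast hSS'))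
  by_cases hm : ∃ e ∈ M, v ∈ e
  · -- v is matched; add v and its partner w
    obtain ⟨e, he, hve⟩ := hm
    obtain ⟨w, rfl⟩ := Sym2.mem_iff_exists.mp hve
    have hvw : G.Adj v w := hM.1 he
    have hwv : w ≠ v := fun h => (G.loopless.irrefl v) (h ▸ hvw)
    have hwT : w ∉ T := fun h => hv ((hclosed _ he v w rfl).mpr h)
    refine ⟨insert w (insert v T), insert s(v,w) (insert s(u,v) S), ?_, ?_, ?_, ?_, ?_, ?_, ?_⟩
    · intro e' he'
      simp only [coe_insert, Set.mem_insert_iff] at he'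
      rcases he' with rfl | rfl | h
      · exact hvw
      · exact hadj
      · exact hSE h
    · intro e' he' x hx
      simp only [mem_insert] at he' ⊢
      rcases he' with rfl | rfl | h
      · rcases Sym2.mem_iff.mp hx with rfl | rfl
        · right; left; rfl
        · left; rfl
      · rcases Sym2.mem_iff.mp hx with rfl | rfl
        · right; right; exact hu
        · right; left; rfl
      · right; right; exact hST _ h _ hx
    · have h1 : s(u,v) ∉ S := fun h => hv (hST _ h v (Sym2.mem_mk_right u v))
      have h2 : s(v,w) ∉ insert s(u,v) S := by
        simp only [mem_insert]
        rintro (h | h)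
        · rw [Sym2.eq_iff] at h
          rcases h with ⟨h3, h4⟩ | ⟨h3, h4⟩
          · exact huv h3.symm
          · exact hwT (h4 ▸ hu)
        · exact hv (hST _ h v (Sym2.mem_mk_left v w))
      rw [card_insert_of_notMem h2, card_insert_of_notMem h1,
        card_insert_of_notMem (fun h => hwT (mem_insert.mp h |>.elim (fun h => absurd h hwv) id)),
        card_insert_of_notMem hv]
      omega
    · -- reachability
      set S' := insert s(v,w) (insert s(u,v) S) with hS'
      have hSS' : S ⊆ S' := by
        intro e' h; simp only [hS', mem_insert]; tauto
      have hAdjuv : (SimpleGraph.fromEdgeSet (↑S' : Set (Sym2 V))).Adj u v := by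
        rw [SimpleGraph.fromEdgeSet_adj]
        exact ⟨by simp [hS'], huv⟩
      have hAdjvw : (SimpleGraph.fromEdgeSet (↑S' : Set (Sym2 V))).Adj v w := by
        rw [SimpleGraph.fromEdgeSet_adj]
        exact ⟨by simp [hS'], fun h => hwv h.symm⟩
      have hru : ∀ x ∈ insert w (insert v T),
          (SimpleGraph.fromEdgeSet (↑S' : Set (Sym2 V))).Reachable x u := by
        intro x hx
        rcases mem_insert.mp hx with rfl | hx
        · exact (hAdjvw.symm.reachable.trans hAdjuv.symm.reachable)
        · rcases mem_insert.mp hx with rfl | hx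
          · exact hAdjuv.symm.reachable
          · exact hmono x u (hreach x hx u hu) _ hSS'
      intro x hx y hy
      exact (hru x hx).trans (hru y hy).symm
    · -- matching closedness
      intro e' he' x y hxy
      by_cases hee : e' = s(v,w)
      · subst hee
        rw [Sym2.eq_iff] at hxy
        rcases hxy with ⟨rfl, rfl⟩ | ⟨rfl, rfl⟩ <;> simp
      · have hdisj := hM.2 (by exact_mod_cast he') (by exact_mod_cast he) hee
        have hx' : x ∉ s(v,w) := fun h => hdisj x (hxy ▸ Sym2.mem_mk_left x y) h
        have hy' : y ∉ s(v,w) := fun h => hdisj y (hxy ▸ Sym2.mem_mk_right x y) h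
        have hxv : x ≠ v := fun h => hx' (h ▸ Sym2.mem_mk_left v w)
        have hxw : x ≠ w := fun h => hx' (h ▸ Sym2.mem_mk_right v w)
        have hyv : y ≠ v := fun h => hy' (h ▸ Sym2.mem_mk_left v w)
        have hyw : y ≠ w := fun h => hy' (h ▸ Sym2.mem_mk_right v w)
        simp only [mem_insert, hxv, hxw, hyv, hyw, false_or]
        exact hclosed e' he' x y hxy
    · have : v ∉ insert v T → False := by simp
      rw [card_insert_of_notMem (fun h => hwT (mem_insert.mp h |>.elim (fun h => absurd h hwv) id)),
        card_insert_of_notMem hv]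
      omega
    · rw [card_insert_of_notMem (fun h => hwT (mem_insert.mp h |>.elim (fun h => absurd h hwv) id)),
        card_insert_of_notMem hv]
  · -- v unmatched; add just v
    push_neg at hm
    refine ⟨insert v T, insert s(u,v) S, ?_, ?_, ?_, ?_, ?_, ?_, ?_⟩
    · intro e' he'
      simp only [coe_insert, Set.mem_insert_iff] at he'
      rcases he' with rfl | h
      · exact hadj
      · exact hSE h
    · intro e' he' x hx
      simp only [mem_insert] at he' ⊢
      rcases he' with rfl | h
      · rcases Sym2.mem_iff.mp hx with rfl | rfl
        · right; exact hu
        · left; rfl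
      · right; exact hST _ h _ hx
    · have h1 : s(u,v) ∉ S := fun h => hv (hST _ h v (Sym2.mem_mk_right u v))
      rw [card_insert_of_notMem h1, card_insert_of_notMem hv]
      omega
    · set S' := insert s(u,v) S with hS'
      have hSS' : S ⊆ S' := subset_insert _ _
      have hAdjuv : (SimpleGraph.fromEdgeSet (↑S' : Set (Sym2 V))).Adj u v := by
        rw [SimpleGraph.fromEdgeSet_adj]
        exact ⟨by simp [hS'], huv⟩
      have hru : ∀ x ∈ insert v T,
          (SimpleGraph.fromEdgeSet (↑S' : Set (Sym2 V))).Reachable x u := by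
        intro x hx
        rcases mem_insert.mp hx with rfl | hx
        · exact hAdjuv.symm.reachable
        · exact hmono x u (hreach x hx u hu) _ hSS'
      intro x hx y hy
      exact (hru x hx).trans (hru y hy).symm
    · intro e' he' x y hxy
      have hx' : x ≠ v := fun h => hm e' he' (hxy ▸ h ▸ Sym2.mem_mk_left x y)
      have hy' : y ≠ v := fun h => hm e' he' (hxy ▸ h ▸ Sym2.mem_mk_right x y)
      simp only [mem_insert, hx', hy', false_or]
      exact hclosed e' he' x y hxy
    · rw [card_insert_of_notMem hv]; omega
    · rw [card_insert_of_notMem hv]; omega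
open Finset in
lemma grow {V : Type*} [Fintype V] [DecidableEq V] {G : SimpleGraph V}
    (hconn : G.Connected) {M : Finset (Sym2 V)} (hM : IsMatching' G M) (d : ℕ)
    (hcard : 2 * d + 2 ≤ Fintype.card V) :
    ∃ (T : Finset V) (S : Finset (Sym2 V)),
      (↑S : Set (Sym2 V)) ⊆ G.edgeSet ∧
      (∀ e ∈ S, ∀ v ∈ e, v ∈ T) ∧
      S.card + 1 = T.card ∧
      (∀ u ∈ T, ∀ v ∈ T, (SimpleGraph.fromEdgeSet (↑S : Set (Sym2 V))).Reachable u v) ∧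
      (∀ e ∈ M, ∀ x y : V, e = s(x,y) → (x ∈ T ↔ y ∈ T)) ∧
      2 * d + 1 ≤ T.card ∧ T.card ≤ 2 * d + 2 := by
  classical
  -- the induction
  have aux : ∀ j : ℕ, ∀ (T : Finset V) (S : Finset (Sym2 V)),
      (↑S : Set (Sym2 V)) ⊆ G.edgeSet →
      (∀ e ∈ S, ∀ v ∈ e, v ∈ T) →
      S.card + 1 = T.card →
      (∀ u ∈ T, ∀ v ∈ T, (SimpleGraph.fromEdgeSet (↑S : Set (Sym2 V))).Reachable u v) →
      (∀ e ∈ M, ∀ x y : V, e = s(x,y) → (x ∈ T ↔ y ∈ T)) →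
      T.card ≤ 2 * d + 2 → 2 * d + 2 ≤ T.card + j →
      ∃ (T' : Finset V) (S' : Finset (Sym2 V)),
        (↑S' : Set (Sym2 V)) ⊆ G.edgeSet ∧
        (∀ e ∈ S', ∀ v ∈ e, v ∈ T') ∧
        S'.card + 1 = T'.card ∧
        (∀ u ∈ T', ∀ v ∈ T', (SimpleGraph.fromEdgeSet (↑S' : Set (Sym2 V))).Reachable u v) ∧
        (∀ e ∈ M, ∀ x y : V, e = s(x,y) → (x ∈ T' ↔ y ∈ T')) ∧
        2 * d + 1 ≤ T'.card ∧ T'.card ≤ 2 * d + 2 := by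
    intro j
    induction j with
    | zero =>
      intro T S h1 h2 h3 h4 h5 h6 h7
      exact ⟨T, S, h1, h2, h3, h4, h5, by omega, h6⟩
    | succ j ih =>
      intro T S h1 h2 h3 h4 h5 h6 h7
      by_cases hbig : 2 * d + 1 ≤ T.card
      · exact ⟨T, S, h1, h2, h3, h4, h5, hbig, h6⟩
      · have hproper : T ≠ univ := by
          intro h
          rw [h, card_univ] at hbig
          omega
        obtain ⟨T', S', g1, g2, g3, g4, g5, g6, g7⟩ :=
          grow_step hconn hM h1 h2 h3 h4 h5 hproper
        exact ih T' S' g1 g2 g3 g4 g5 (by omega) (by omega)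
  -- the seed
  have hVne : Nonempty V := by
    rw [← Fintype.card_pos_iff]; omega
  obtain ⟨v0⟩ := hVne
  by_cases hm : ∃ e ∈ M, v0 ∈ e
  · obtain ⟨e, he, hve⟩ := hm
    obtain ⟨w, rfl⟩ := Sym2.mem_iff_exists.mp hve
    have hvw : G.Adj v0 w := hM.1 he
    have hwv : w ≠ v0 := fun h => (G.loopless.irrefl v0) (h ▸ hvw)
    refine aux (2 * d) {v0, w} {s(v0, w)} ?_ ?_ ?_ ?_ ?_ ?_ ?_
    · intro e' he'
      simp only [coe_singleton, Set.mem_singleton_iff] at he'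
      subst he'; exact hvw
    · intro e' he' x hx
      rw [mem_singleton] at he'
      subst he'
      rcases Sym2.mem_iff.mp hx with rfl | rfl <;> simp
    · rw [card_singleton, card_insert_of_notMem (by simp only [mem_singleton]; exact fun h => hwv h.symm), card_singleton]
    · have hadj : (SimpleGraph.fromEdgeSet (↑({s(v0,w)} : Finset (Sym2 V)) : Set (Sym2 V))).Adj v0 w := by
        rw [SimpleGraph.fromEdgeSet_adj]
        exact ⟨by simp, fun h => hwv h.symm⟩
      intro x hx y hy
      have key : ∀ z ∈ ({v0, w} : Finset V),
          (SimpleGraph.fromEdgeSet (↑({s(v0,w)} : Finset (Sym2 V)) : Set (Sym2 V))).Reachable z v0 := by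
        intro z hz
        rcases mem_insert.mp hz with h | h
        · subst h; exact SimpleGraph.Reachable.refl _
        · rw [mem_singleton] at h; subst h; exact hadj.symm.reachable
      exact (key x hx).trans (key y hy).symm
    · intro e' he' x y hxy
      by_cases hee : e' = s(v0, w)
      · subst hee
        rw [Sym2.eq_iff] at hxy
        rcases hxy with ⟨h3, h4⟩ | ⟨h3, h4⟩ <;> subst h3 <;> subst h4 <;> simp
      · have hdisj := hM.2 (by exact_mod_cast he') (by exact_mod_cast he) hee
        have hx' : x ∉ s(v0,w) := fun h => hdisj x (hxy ▸ Sym2.mem_mk_left x y) h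
        have hy' : y ∉ s(v0,w) := fun h => hdisj y (hxy ▸ Sym2.mem_mk_right x y) h
        have hxv : x ≠ v0 := fun h => hx' (h ▸ Sym2.mem_mk_left v0 w)
        have hxw : x ≠ w := fun h => hx' (h ▸ Sym2.mem_mk_right v0 w)
        have hyv : y ≠ v0 := fun h => hy' (h ▸ Sym2.mem_mk_left v0 w)
        have hyw : y ≠ w := fun h => hy' (h ▸ Sym2.mem_mk_right v0 w)
        simp [hxv, hxw, hyv, hyw]
    · have : ({v0, w} : Finset V).card ≤ 2 := card_insert_le _ _ |>.trans (by simp)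
      omega
    · have : ({v0, w} : Finset V).card = 2 := by
        rw [card_insert_of_notMem (by simp only [mem_singleton]; exact fun h => hwv h.symm), card_singleton]
      omega
  · push_neg at hm
    refine aux (2 * d + 1) {v0} ∅ ?_ ?_ ?_ ?_ ?_ ?_ ?_
    · simp
    · simp
    · simp
    · intro x hx y hy
      rw [mem_singleton] at hx hy; subst hx; subst hy
      exact SimpleGraph.Reachable.refl _
    · intro e' he' x y hxy
      have hx' : x ≠ v0 := fun h => hm e' he' (hxy ▸ h ▸ Sym2.mem_mk_left x y)
      have hy' : y ≠ v0 := fun h => hm e' he' (hxy ▸ h ▸ Sym2.mem_mk_right x y)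
      simp [hx', hy']
    · rw [card_singleton]; omega
    · rw [card_singleton]; omega
open Finset in
theorem stmt12 {V : Type*} [Fintype V] (G : SimpleGraph V) (d : ℕ) (hd : 1 ≤ d)
    (hconn : G.Connected) (hbip : IsBipartite' G)
    (hcard : 2 * d + 2 ≤ Fintype.card V) (halpha : d + 1 ≤ alpha' G) :
    ∃ S : Finset (Sym2 V), (↑S : Set (Sym2 V)) ⊆ G.edgeSet ∧ S.card ≤ 2 * d + 1 ∧
      alpha' (contract' G (↑S : Set (Sym2 V))) ≤ alpha' G - d := by
  classical
  obtain ⟨M, hM, hkoenig⟩ := koenig G hbip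
  obtain ⟨T, S, hSE, hST, hScard, hreach, hclosed, hT1, hT2⟩ := grow hconn hM d hcard
  refine ⟨S, hSE, by omega, ?_⟩
  set n := Fintype.card V with hn
  set H := SimpleGraph.fromEdgeSet (↑S : Set (Sym2 V)) with hH
  letI : Fintype H.ConnectedComponent := Fintype.ofFinite _
  have hTn : T.card ≤ n := by rw [hn, ← card_univ]; exact card_le_card (subset_univ T)
  have hTne : T.Nonempty := by rw [← card_pos]; omega
  obtain ⟨v0, hv0⟩ := hTne
  -- vertices outside T are isolated in H
  have hiso : ∀ v : V, v ∉ T → ∀ w, H.Reachable v w → w = v := by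
    intro v hv
    apply isolated_eq
    intro w hadj
    rw [hH, SimpleGraph.fromEdgeSet_adj] at hadj
    exact hv (hST _ (by exact_mod_cast hadj.1) v (Sym2.mem_mk_left v w))
  have hmkinj : ∀ v w : V, v ∉ T → H.connectedComponentMk v = H.connectedComponentMk w → v = w := by
    intro v w hv h
    exact (hiso v hv w (SimpleGraph.ConnectedComponent.eq.mp h)).symm
  -- component count
  have hc : Fintype.card H.ConnectedComponent + T.card ≤ n + 1 := by
    have hsub : (univ : Finset H.ConnectedComponent) ⊆
        T.image H.connectedComponentMk ∪ (univ \ T).image H.connectedComponentMk := by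
      intro C _
      obtain ⟨v, rfl⟩ := C.exists_rep
      by_cases hvT : v ∈ T
      · exact mem_union.mpr (Or.inl (mem_image.mpr ⟨v, hvT, rfl⟩))
      · exact mem_union.mpr (Or.inr (mem_image.mpr ⟨v, mem_sdiff.mpr ⟨mem_univ _, hvT⟩, rfl⟩))
    have h1 : (T.image H.connectedComponentMk).card ≤ 1 := by
      apply card_le_one.mpr
      intro a ha b hb
      obtain ⟨x, hx, rfl⟩ := mem_image.mp ha
      obtain ⟨y, hy, rfl⟩ := mem_image.mp hb
      exact SimpleGraph.ConnectedComponent.eq.mpr (hreach x hx y hy)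
    have h2 : ((univ \ T).image H.connectedComponentMk).card ≤ n - T.card := by
      calc ((univ \ T).image H.connectedComponentMk).card ≤ (univ \ T).card := card_image_le
        _ = n - T.card := by rw [card_sdiff_of_subset (subset_univ T), card_univ]
    have h3 := card_le_card hsub
    have h4 := (card_union_le _ _).trans (add_le_add h1 h2)
    rw [card_univ] at h3
    omega
  -- matching split
  set Mout := M.filter (fun e => ∀ v ∈ e, v ∉ T) with hMout
  set Min := M.filter (fun e => ∀ v ∈ e, v ∈ T) with hMin
  have hMsplit : M.card ≤ Min.card + Mout.card := by
    have : M ⊆ Min ∪ Mout := by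
      intro e he
      induction e using Sym2.ind with
      | _ x y =>
        by_cases hx : x ∈ T
        · refine mem_union.mpr (Or.inl (mem_filter.mpr ⟨he, ?_⟩))
          intro v hv
          rcases Sym2.mem_iff.mp hv with rfl | rfl
          · exact hx
          · exact (hclosed _ he x v rfl).mp hx
        · refine mem_union.mpr (Or.inr (mem_filter.mpr ⟨he, ?_⟩))
          intro v hv
          rcases Sym2.mem_iff.mp hv with rfl | rfl
          · exact hx
          · exact fun h => hx ((hclosed _ he x v rfl).mpr h)
    exact (card_le_card this).trans (card_union_le _ _)
  -- 2 * Min.card ≤ T.card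
  have hMinT : 2 * Min.card ≤ T.card := by
    have hdisj : ∀ e ∈ Min, ∀ f ∈ Min, e ≠ f →
        Disjoint (univ.filter (· ∈ e)) (univ.filter (· ∈ f)) := by
      intro e he f hf hef
      rw [Finset.disjoint_left]
      intro v hv1 hv2
      exact hM.2 (by exact_mod_cast (mem_filter.mp he).1) (by exact_mod_cast (mem_filter.mp hf).1)
        hef v (mem_filter.mp hv1).2 (mem_filter.mp hv2).2
    have hbu : Min.biUnion (fun e => univ.filter (· ∈ e)) ⊆ T := by
      intro v hv
      obtain ⟨e, he, hv2⟩ := mem_biUnion.mp hv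
      exact (mem_filter.mp he).2 v (mem_filter.mp hv2).2
    have hcard2 : ∀ e ∈ Min, (univ.filter (· ∈ e)).card = 2 := by
      intro e he
      have heE : e ∈ G.edgeSet := hM.1 (by exact_mod_cast (mem_filter.mp he).1)
      induction e using Sym2.ind with
      | _ x y =>
        have hxy : x ≠ y := ((G.mem_edgeSet).mp heE).ne
        have : univ.filter (· ∈ s(x,y)) = {x, y} := by
          ext v
          simp [Sym2.mem_iff]
        rw [this, card_insert_of_notMem (by simpa using hxy), card_singleton]
    have := card_biUnion hdisj
    have hsum : ∑ e ∈ Min, (univ.filter (· ∈ e)).card = 2 * Min.card := by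
      rw [Finset.sum_congr rfl hcard2]
      simp [mul_comm]
    have hle := card_le_card hbu
    rw [this, hsum] at hle
    exact hle
  -- now bound independent sets of the contraction
  apply alpha'_le
  intro I hI
  have hpick : ∀ e ∈ Mout, ∃ x, x ∈ e ∧ x ∉ T ∧ H.connectedComponentMk x ∉ I := by
    intro e he
    have heM : e ∈ M := (mem_filter.mp he).1
    have hout : ∀ v ∈ e, v ∉ T := (mem_filter.mp he).2
    have heE : e ∈ G.edgeSet := hM.1 (by exact_mod_cast heM)
    induction e using Sym2.ind with
    | _ x y =>
      have hadj : G.Adj x y := (G.mem_edgeSet).mp heE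
      have hxT : x ∉ T := hout x (Sym2.mem_mk_left x y)
      have hyT : y ∉ T := hout y (Sym2.mem_mk_right x y)
      have hne : H.connectedComponentMk x ≠ H.connectedComponentMk y :=
        fun h => hadj.ne (hmkinj x y hxT h)
      have hcadj : (contract' G (↑S : Set (Sym2 V))).Adj (H.connectedComponentMk x)
          (H.connectedComponentMk y) := by
        rw [contract', SimpleGraph.fromRel_adj]
        exact ⟨hne, Or.inl ⟨x, y, rfl, rfl, hadj⟩⟩
      by_cases hx : H.connectedComponentMk x ∈ I
      · by_cases hy : H.connectedComponentMk y ∈ I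
        · exact absurd hcadj (hI _ hx _ hy)
        · exact ⟨y, Sym2.mem_mk_right x y, hyT, hy⟩
      · exact ⟨x, Sym2.mem_mk_left x y, hxT, hx⟩
  set φ : Sym2 V → H.ConnectedComponent := fun e =>
    if h : ∃ x, x ∈ e ∧ x ∉ T ∧ H.connectedComponentMk x ∉ I then
      H.connectedComponentMk h.choose else H.connectedComponentMk v0 with hφ
  have hφprop : ∀ e ∈ Mout, ∃ x, x ∈ e ∧ x ∉ T ∧ H.connectedComponentMk x ∉ I ∧
      φ e = H.connectedComponentMk x := by
    intro e he
    have h := hpick e he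
    rw [hφ]
    simp only [h, dif_pos]
    exact ⟨h.choose, h.choose_spec.1, h.choose_spec.2.1, h.choose_spec.2.2, rfl⟩
  have hφinj : ∀ e ∈ Mout, ∀ f ∈ Mout, φ e = φ f → e = f := by
    intro e he f hf heq
    obtain ⟨x, hxe, hxT, _, hex⟩ := hφprop e he
    obtain ⟨y, hyf, hyT, _, hfy⟩ := hφprop f hf
    have : x = y := hmkinj x y hxT (by rw [← hex, ← hfy, heq])
    subst this
    by_contra hne
    exact hM.2 (by exact_mod_cast (mem_filter.mp he).1) (by exact_mod_cast (mem_filter.mp hf).1)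
      hne x hxe hyf
  have hφavoid : ∀ e ∈ Mout, φ e ∉ I := by
    intro e he
    obtain ⟨x, _, _, hxI, hex⟩ := hφprop e he
    rw [hex]; exact hxI
  have hMoutI : Mout.card + I.card ≤ Fintype.card H.ConnectedComponent := by
    have h1 : Mout.image φ ⊆ univ \ I := by
      intro C hC
      obtain ⟨e, he, rfl⟩ := mem_image.mp hC
      exact mem_sdiff.mpr ⟨mem_univ _, hφavoid e he⟩
    have h2 : (Mout.image φ).card = Mout.card := card_image_of_injOn hφinj
    have h3 := card_le_card h1
    rw [h2, card_sdiff_of_subset (subset_univ I), card_univ] at h3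
    have h4 : I.card ≤ Fintype.card H.ConnectedComponent := by
      rw [← card_univ]; exact card_le_card (subset_univ I)
    have hfix0 : Fintype.card (SimpleGraph.fromEdgeSet (↑S : Set (Sym2 V))).ConnectedComponent
      = Fintype.card H.ConnectedComponent := rfl
    omega
  have hfix : Fintype.card (SimpleGraph.fromEdgeSet (↑S : Set (Sym2 V))).ConnectedComponent
      = Fintype.card H.ConnectedComponent := rfl
  omega
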